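/- Let X and Y be independent absolutely continuous nonnegative random variables with survival functions F̄ and Ḡ and continuously differentiable pdfs f and g which are strictly positive on (0,∞), with F̄(t) > 0 and Ḡ(t) > 0 for all t > 0. Then the relevation transform is commutative, i.e. Ḡ#F̄(x) = F̄#Ḡ(x) for all x > 0, if and only if X and Y satisfy the proportional hazards rate model, i.e. there exists a constant θ > 0 such that Ḡ(x) = [F̄(x)]^θ for all x > 0. -/

import Mathlib

open MeasureTheory Set Filter intervalIntegral

lemma aux_const_of_deriv_zero {φ : ℝ → ℝ} {a b : ℝ} (hab : a ≤ b) (hc : ContinuousOn φ (Icc a b))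
    (hd : ∀ y ∈ Ioo a b, HasDerivAt φ 0 y) : φ b = φ a := by
  have h := integral_eq_sub_of_hasDeriv_right_of_le hab hc
    (fun y hy => (hd y hy).hasDerivWithinAt) (_root_.intervalIntegrable_const (c := (0:ℝ)))
  have : (0:ℝ) = φ b - φ a := by simpa using h
  linarith

lemma aux_primitive_deriv {e : ℝ → ℝ} {y : ℝ} (hy : 0 < y) (hi : IntervalIntegrable e volume 0 y)
    (hc : ContinuousOn e (Ioi 0)) :
    HasDerivAt (fun x => ∫ t in (0:ℝ)..x, e t) (e y) y :=
  integral_hasDerivAt_right hi (hc.stronglyMeasurableAtFilter isOpen_Ioi y hy)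
    (hc.continuousAt (Ioi_mem_nhds hy))

theorem relevation_comm_iff_phr
    (F G f g : ℝ → ℝ)
    (hfC : ContDiff ℝ 1 f) (hgC : ContDiff ℝ 1 g)
    (hfpos : ∀ x, 0 < x → 0 < f x) (hgpos : ∀ x, 0 < x → 0 < g x)
    (hf : ∀ x, 0 < x → HasDerivAt F (f x) x)
    (hg : ∀ x, 0 < x → HasDerivAt G (g x) x)
    (hFcont : Continuous F) (hGcont : Continuous G)
    (hF0 : F 0 = 0) (hG0 : G 0 = 0)
    (hFbarpos : ∀ t, 0 < t → 0 < 1 - F t) (hGbarpos : ∀ t, 0 < t → 0 < 1 - G t)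
    (hint1 : ∀ x, 0 < x → IntervalIntegrable (fun t => g t / (1 - F t)) volume 0 x)
    (hint2 : ∀ x, 0 < x → IntervalIntegrable (fun t => f t / (1 - G t)) volume 0 x) :
    (∀ x, 0 < x →
        (1 - G x) + (1 - F x) * ∫ t in (0:ℝ)..x, g t / (1 - F t)
          = (1 - F x) + (1 - G x) * ∫ t in (0:ℝ)..x, f t / (1 - G t))
      ↔ ∃ θ : ℝ, 0 < θ ∧ ∀ x, 0 < x → 1 - G x = (1 - F x) ^ θ := by
  have hfc : Continuous f := hfC.continuous
  have hgc : Continuous g := hgC.continuous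
  have hFbc : Continuous (fun t => 1 - F t) := continuous_const.sub hFcont
  have hGbc : Continuous (fun t => 1 - G t) := continuous_const.sub hGcont
  have hFbp : ∀ t ∈ Ici (0:ℝ), 0 < 1 - F t := by
    intro t ht
    rcases eq_or_lt_of_le (mem_Ici.mp ht) with h | h
    · rw [← h, hF0]; norm_num
    · exact hFbarpos t h
  have hGbp : ∀ t ∈ Ici (0:ℝ), 0 < 1 - G t := by
    intro t ht
    rcases eq_or_lt_of_le (mem_Ici.mp ht) with h | h
    · rw [← h, hG0]; norm_num
    · exact hGbarpos t h
  set I : ℝ → ℝ := fun x => ∫ t in (0:ℝ)..x, g t / (1 - F t) with hIdef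
  set J : ℝ → ℝ := fun x => ∫ t in (0:ℝ)..x, f t / (1 - G t) with hJdef
  have contq1 : ContinuousOn (fun t => g t / (1 - F t)) (Ici 0) :=
    hgc.continuousOn.div hFbc.continuousOn (fun t ht => (hFbp t ht).ne')
  have contq2 : ContinuousOn (fun t => f t / (1 - G t)) (Ici 0) :=
    hfc.continuousOn.div hGbc.continuousOn (fun t ht => (hGbp t ht).ne')
  have hId : ∀ y, 0 < y → HasDerivAt I (g y / (1 - F y)) y := fun y hy =>
    aux_primitive_deriv hy (hint1 y hy) (contq1.mono Ioi_subset_Ici_self)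
  have hJd : ∀ y, 0 < y → HasDerivAt J (f y / (1 - G y)) y := fun y hy =>
    aux_primitive_deriv hy (hint2 y hy) (contq2.mono Ioi_subset_Ici_self)
  have hFbd : ∀ y, 0 < y → HasDerivAt (fun x => 1 - F x) (-f y) y := fun y hy =>
    (hf y hy).const_sub 1
  have hGbd : ∀ y, 0 < y → HasDerivAt (fun x => 1 - G x) (-g y) y := fun y hy =>
    (hg y hy).const_sub 1
  have contJ : ∀ x, 0 < x → ContinuousOn J (Icc 0 x) := by
    intro x hx
    have : IntegrableOn (fun t => f t / (1 - G t)) (uIcc 0 x) volume := by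
      rw [uIcc_of_le hx.le]
      exact (contq2.mono Icc_subset_Ici_self).integrableOn_Icc
    simpa [uIcc_of_le hx.le] using continuousOn_primitive_interval this
  have hI0 : I 0 = 0 := integral_same
  have hJ0 : J 0 = 0 := integral_same
  constructor
  · -- forward direction
    intro hcond
    set E : ℝ → ℝ := fun x => ∫ t in (0:ℝ)..x, f t * (1 - G t) / (1 - F t) ^ 2 with hEdef
    have contq3 : ContinuousOn (fun t => f t * (1 - G t) / (1 - F t) ^ 2) (Ici 0) :=
      (hfc.mul hGbc).continuousOn.div (hFbc.pow 2).continuousOn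
        (fun t ht => (pow_pos (hFbp t ht) 2).ne')
    have hint3 : ∀ x, 0 < x →
        IntervalIntegrable (fun t => f t * (1 - G t) / (1 - F t) ^ 2) volume 0 x := by
      intro x hx
      apply ContinuousOn.intervalIntegrable
      rw [uIcc_of_le hx.le]
      exact contq3.mono Icc_subset_Ici_self
    have hEd : ∀ y, 0 < y → HasDerivAt E (f y * (1 - G y) / (1 - F y) ^ 2) y := fun y hy =>
      aux_primitive_deriv hy (hint3 y hy) (contq3.mono Ioi_subset_Ici_self)
    have contE : ∀ x, 0 < x → ContinuousOn E (Icc 0 x) := by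
      intro x hx
      have : IntegrableOn (fun t => f t * (1 - G t) / (1 - F t) ^ 2) (uIcc 0 x) volume := by
        rw [uIcc_of_le hx.le]
        exact (contq3.mono Icc_subset_Ici_self).integrableOn_Icc
      simpa [uIcc_of_le hx.le] using continuousOn_primitive_interval this
    have hE0 : E 0 = 0 := integral_same
    -- Step 1: f I = g J
    have key : ∀ y, 0 < y → f y * I y = g y * J y := by
      intro y hy
      set K : ℝ → ℝ := fun x => (1 - G x) + (1 - F x) * I x - ((1 - F x) + (1 - G x) * J x)
        with hKdef
      have hKd : HasDerivAt K
          ((-g y + (-f y * I y + (1 - F y) * (g y / (1 - F y)))) -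
            (-f y + (-g y * J y + (1 - G y) * (f y / (1 - G y))))) y :=
        ((hGbd y hy).add ((hFbd y hy).mul (hId y hy))).sub
          ((hFbd y hy).add ((hGbd y hy).mul (hJd y hy)))
      have hK0 : HasDerivAt K 0 y := by
        have hev : K =ᶠ[nhds y] fun _ => 0 := by
          filter_upwards [Ioi_mem_nhds hy] with z hz
          have := hcond z hz
          simp only [hKdef]
          linarith
        exact (hasDerivAt_const y (0:ℝ)).congr_of_eventuallyEq hev
      have huniq := hKd.unique hK0
      have hFby : (1 - F y) ≠ 0 := (hFbarpos y hy).ne'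
      have hGby : (1 - G y) ≠ 0 := (hGbarpos y hy).ne'
      rw [mul_div_cancel₀ _ hFby, mul_div_cancel₀ _ hGby] at huniq
      linarith
    -- Step 2: E = Ḡ J / F̄
    have EW : ∀ x, 0 < x → E x = (1 - G x) * J x / (1 - F x) := by
      intro x hx
      set M : ℝ → ℝ := fun z => E z - (1 - G z) * J z / (1 - F z) with hMdef
      have hM0 : M 0 = 0 := by simp [hMdef, hE0, hJ0]
      have hMc : ContinuousOn M (Icc 0 x) := by
        apply (contE x hx).sub
        exact ((hGbc.continuousOn.mul (contJ x hx)).div hFbc.continuousOn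
          (fun t ht => (hFbp t (mem_Ici.mpr ht.1)).ne'))
      have hMd : ∀ y ∈ Ioo (0:ℝ) x, HasDerivAt M 0 y := by
        intro y hy
        have hy0 : 0 < y := hy.1
        have hFby : (1 - F y) ≠ 0 := (hFbarpos y hy0).ne'
        have hGby : (1 - G y) ≠ 0 := (hGbarpos y hy0).ne'
        have hd2 : HasDerivAt (fun z => (1 - G z) * J z / (1 - F z))
            (((-g y * J y + (1 - G y) * (f y / (1 - G y))) * (1 - F y) -
              (1 - G y) * J y * (-f y)) / (1 - F y) ^ 2) y :=
          ((hGbd y hy0).mul (hJd y hy0)).div (hFbd y hy0) hFby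
        have hDM : HasDerivAt M
            (f y * (1 - G y) / (1 - F y) ^ 2 -
              ((-g y * J y + (1 - G y) * (f y / (1 - G y))) * (1 - F y) -
                (1 - G y) * J y * (-f y)) / (1 - F y) ^ 2) y := (hEd y hy0).sub hd2
        have hz : f y * (1 - G y) / (1 - F y) ^ 2 -
              ((-g y * J y + (1 - G y) * (f y / (1 - G y))) * (1 - F y) -
                (1 - G y) * J y * (-f y)) / (1 - F y) ^ 2 = 0 := by
          have h1 : 1 - G y + (1 - F y) * I y = 1 - F y + (1 - G y) * J y := hcond y hy0
          have h2 := key y hy0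
          rw [mul_div_cancel₀ _ hGby, div_sub_div_same, div_eq_zero_iff]
          left
          linear_combination f y * h1 - (1 - F y) * h2
        rwa [hz] at hDM
      have := aux_const_of_deriv_zero hx.le hMc hMd
      rw [hM0] at this
      have : M x = 0 := this
      simp only [hMdef] at this
      linarith
    -- Step 3: E positive
    have Epos : ∀ x, 0 < x → 0 < E x := by
      intro x hx
      apply intervalIntegral_pos_of_pos_on (hint3 x hx)
      · intro t ht
        have ht0 : 0 < t := ht.1
        have := hFbarpos t ht0
        have := hGbarpos t ht0
        have := hfpos t ht0
        positivity
      · exact hx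
    -- Step 4: c constant
    set c : ℝ → ℝ := fun x => ((1 - G x) / (1 - F x) - 1) / E x with hcdef
    have hcd : ∀ y, 0 < y → HasDerivAt c 0 y := by
      intro y hy
      have hFby : (1 - F y) ≠ 0 := (hFbarpos y hy).ne'
      have hGby : (1 - G y) ≠ 0 := (hGbarpos y hy).ne'
      have hEy : E y ≠ 0 := (Epos y hy).ne'
      have hud : HasDerivAt (fun z => (1 - G z) / (1 - F z) - 1)
          ((-g y * (1 - F y) - (1 - G y) * (-f y)) / (1 - F y) ^ 2) y :=
        (((hGbd y hy).div (hFbd y hy) hFby)).sub_const 1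
      have hcd' : HasDerivAt c
          (((-g y * (1 - F y) - (1 - G y) * (-f y)) / (1 - F y) ^ 2 * E y -
            ((1 - G y) / (1 - F y) - 1) * (f y * (1 - G y) / (1 - F y) ^ 2)) / E y ^ 2) y :=
        hud.div (hEd y hy) hEy
      have hz : ((-g y * (1 - F y) - (1 - G y) * (-f y)) / (1 - F y) ^ 2 * E y -
            ((1 - G y) / (1 - F y) - 1) * (f y * (1 - G y) / (1 - F y) ^ 2)) / E y ^ 2 = 0 := by
        have h1 : 1 - G y + (1 - F y) * I y = 1 - F y + (1 - G y) * J y := hcond y hy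
        have h2 := key y hy
        have h3 := EW y hy
        rw [div_eq_zero_iff]
        left
        rw [h3]
        field_simp
        linear_combination ((1 - G y) * (1 - F y)) * h2 - ((1 - G y) * f y) * h1
      rwa [hz] at hcd'
    have hccont : ContinuousOn c (Ioi 0) := fun z hz =>
      ((hcd z hz).continuousAt).continuousWithinAt
    have ccon : ∀ x, 0 < x → c x = c 1 := by
      intro x hx
      rcases le_total x 1 with h | h
      · exact (aux_const_of_deriv_zero h
          (hccont.mono (fun t ht => lt_of_lt_of_le hx ht.1))
          (fun y hy => hcd y (hx.trans hy.1))).symm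
      · exact aux_const_of_deriv_zero h
          (hccont.mono (fun t ht => lt_of_lt_of_le one_pos ht.1))
          (fun y hy => hcd y (one_pos.trans hy.1))
    -- Step 5: Gb = Fb * (1 + c 1 * E)
    have hGbeq : ∀ x, 0 < x → 1 - G x = (1 - F x) * (1 + c 1 * E x) := by
      intro x hx
      have h : c x = c 1 := ccon x hx
      have hEx : E x ≠ 0 := (Epos x hx).ne'
      have hFbx : (1 - F x) ≠ 0 := (hFbarpos x hx).ne'
      simp only [hcdef] at h
      rw [div_eq_iff hEx] at h
      field_simp at h
      linear_combination h
    -- Step 6: hazard proportionality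
    set θ : ℝ := 1 - c 1 with hθdef
    have hazard : ∀ y, 0 < y → g y * (1 - F y) = θ * f y * (1 - G y) := by
      intro y hy
      have hFby : (1 - F y) ≠ 0 := (hFbarpos y hy).ne'
      have hd1 : HasDerivAt (fun z => (1 - F z) * (1 + c 1 * E z))
          (-f y * (1 + c 1 * E y) +
            (1 - F y) * (c 1 * (f y * (1 - G y) / (1 - F y) ^ 2))) y :=
        (hFbd y hy).mul (((hEd y hy).const_mul (c 1)).const_add 1)
      have hev : (fun z => 1 - G z) =ᶠ[nhds y] fun z => (1 - F z) * (1 + c 1 * E z) := by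
        filter_upwards [Ioi_mem_nhds hy] with z hz
        exact hGbeq z hz
      have huniq := (hGbd y hy).unique (hd1.congr_of_eventuallyEq hev)
      have h5 := hGbeq y hy
      field_simp at huniq
      have hh : (1 - F y) * (g y * (1 - F y)) = (1 - F y) * ((1 - c 1) * f y * (1 - G y)) := by
        linear_combination -(1 - F y) * huniq - (f y * (1 - F y)) * h5
      simp only [hθdef]
      exact mul_left_cancel₀ hFby hh
    have hθpos : 0 < θ := by
      have h := hazard 1 one_pos
      have h1 := hfpos 1 one_pos
      have h2 := hgpos 1 one_pos
      have h3 := hFbarpos 1 one_pos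
      have h4 := hGbarpos 1 one_pos
      nlinarith [mul_pos h2 h3, mul_pos h1 h4]
    refine ⟨θ, hθpos, fun x hx => ?_⟩
    set h : ℝ → ℝ := fun z => Real.log (1 - G z) - θ * Real.log (1 - F z) with hhdef
    have hh0 : h 0 = 0 := by simp [hhdef, hF0, hG0]
    have hhc : ContinuousOn h (Icc 0 x) := by
      apply ContinuousOn.sub
      · exact ContinuousOn.log (hGbc.continuousOn.mono Icc_subset_Ici_self)
          (fun t ht => (hGbp t (mem_Ici.mpr ht.1)).ne')
      · exact continuousOn_const.mul (ContinuousOn.log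
          (hFbc.continuousOn.mono Icc_subset_Ici_self)
          (fun t ht => (hFbp t (mem_Ici.mpr ht.1)).ne'))
    have hhd : ∀ y ∈ Ioo (0:ℝ) x, HasDerivAt h 0 y := by
      intro y hy
      have hy0 : 0 < y := hy.1
      have hFby : (1 - F y) ≠ 0 := (hFbarpos y hy0).ne'
      have hGby : (1 - G y) ≠ 0 := (hGbarpos y hy0).ne'
      have hd1 : HasDerivAt h (-g y / (1 - G y) - θ * (-f y / (1 - F y))) y :=
        ((hGbd y hy0).log hGby).sub (((hFbd y hy0).log hFby).const_mul θ)
      have hz : -g y / (1 - G y) - θ * (-f y / (1 - F y)) = 0 := by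
        have h6 := hazard y hy0
        field_simp
        linear_combination -h6
      rwa [hz] at hd1
    have hfin := aux_const_of_deriv_zero hx.le hhc hhd
    rw [hh0] at hfin
    simp only [hhdef] at hfin
    have hlog : Real.log (1 - G x) = Real.log (1 - F x) * θ := by
      rw [mul_comm]; linarith
    rw [Real.rpow_def_of_pos (hFbarpos x hx), ← hlog, Real.exp_log (hGbarpos x hx)]
  · -- backward direction
    rintro ⟨θ, hθpos, hPH⟩
    have gform : ∀ y, 0 < y → g y = θ * f y * (1 - F y) ^ (θ - 1) := by
      intro y hy
      have hFby : (0:ℝ) < 1 - F y := hFbarpos y hy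
      have houter : HasDerivAt (fun u : ℝ => u ^ θ) (θ * (1 - F y) ^ (θ - 1)) (1 - F y) :=
        Real.hasDerivAt_rpow_const (Or.inl hFby.ne')
      have hcomp : HasDerivAt (fun z => (1 - F z) ^ θ)
          (θ * (1 - F y) ^ (θ - 1) * (-f y)) y := by have h := houter.comp y (hFbd y hy); exact h
      have hd : HasDerivAt (fun z => 1 - (1 - F z) ^ θ)
          (-(θ * (1 - F y) ^ (θ - 1) * (-f y))) y := hcomp.const_sub 1
      have hev : G =ᶠ[nhds y] fun z => 1 - (1 - F z) ^ θ := by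
        filter_upwards [Ioi_mem_nhds hy] with z hz
        have := hPH z hz
        linarith
      have huniq := (hg y hy).unique (hd.congr_of_eventuallyEq hev)
      rw [huniq]; ring
    intro x hx
    by_cases hθ1 : θ = 1
    · subst hθ1
      have hGF : 1 - G x = 1 - F x := by rw [hPH x hx, Real.rpow_one]
      have hintq : (∫ t in (0:ℝ)..x, g t / (1 - F t)) = ∫ t in (0:ℝ)..x, f t / (1 - G t) := by
        apply intervalIntegral.integral_congr_ae
        apply Eventually.of_forall
        intro t ht
        rw [uIoc_of_le hx.le] at ht
        have ht0 : 0 < t := ht.1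
        rw [hPH t ht0, Real.rpow_one, gform t ht0]
        simp [Real.rpow_zero]
      rw [hGF, hintq]
    · have hθ1' : θ - 1 ≠ 0 := sub_ne_zero.mpr hθ1
      have hIval : I x = θ / (θ - 1) * (1 - (1 - F x) ^ (θ - 1)) := by
        have hφc : ContinuousOn (fun t => -(θ / (θ - 1)) * (1 - F t) ^ (θ - 1)) (Icc 0 x) :=
          continuousOn_const.mul (ContinuousOn.rpow_const
            (hFbc.continuousOn.mono Icc_subset_Ici_self)
            (fun t ht => Or.inl (hFbp t (mem_Ici.mpr ht.1)).ne'))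
        have hφd : ∀ y ∈ Ioo (0:ℝ) x,
            HasDerivAt (fun t => -(θ / (θ - 1)) * (1 - F t) ^ (θ - 1)) (g y / (1 - F y)) y := by
          intro y hy
          have hy0 : 0 < y := hy.1
          have hFby : (0:ℝ) < 1 - F y := hFbarpos y hy0
          have houter : HasDerivAt (fun u : ℝ => u ^ (θ - 1))
              ((θ - 1) * (1 - F y) ^ (θ - 1 - 1)) (1 - F y) :=
            Real.hasDerivAt_rpow_const (Or.inl hFby.ne')
          have hcomp : HasDerivAt (fun z => (1 - F z) ^ (θ - 1))
              ((θ - 1) * (1 - F y) ^ (θ - 1 - 1) * (-f y)) y := by have h := houter.comp y (hFbd y hy0); exact h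
          have hd := hcomp.const_mul (-(θ / (θ - 1)))
          refine hd.congr_deriv (Eq.symm ?_)
          rw [gform y hy0]
          have hr : (1 - F y) ^ (θ - 1 - 1) = (1 - F y) ^ (θ - 1) / (1 - F y) := by
            rw [Real.rpow_sub hFby, Real.rpow_one]
          rw [hr]
          have hne : (1 - F y) ≠ 0 := hFby.ne'
          field_simp
        have heq := integral_eq_sub_of_hasDeriv_right_of_le hx.le hφc
          (fun y hy => (hφd y hy).hasDerivWithinAt) (hint1 x hx)
        show (∫ t in (0:ℝ)..x, g t / (1 - F t)) = θ / (θ - 1) * (1 - (1 - F x) ^ (θ - 1))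
        rw [heq, hF0]
        simp only [sub_zero, Real.one_rpow]
        ring
      have hJval : J x = ((1 - F x) ^ (1 - θ) - 1) / (θ - 1) := by
        have hφc : ContinuousOn (fun t => (1 - F t) ^ (1 - θ) / (θ - 1)) (Icc 0 x) :=
          ContinuousOn.div_const (ContinuousOn.rpow_const
            (hFbc.continuousOn.mono Icc_subset_Ici_self)
            (fun t ht => Or.inl (hFbp t (mem_Ici.mpr ht.1)).ne')) _
        have hφd : ∀ y ∈ Ioo (0:ℝ) x,
            HasDerivAt (fun t => (1 - F t) ^ (1 - θ) / (θ - 1)) (f y / (1 - G y)) y := by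
          intro y hy
          have hy0 : 0 < y := hy.1
          have hFby : (0:ℝ) < 1 - F y := hFbarpos y hy0
          have houter : HasDerivAt (fun u : ℝ => u ^ (1 - θ))
              ((1 - θ) * (1 - F y) ^ (1 - θ - 1)) (1 - F y) :=
            Real.hasDerivAt_rpow_const (Or.inl hFby.ne')
          have hcomp : HasDerivAt (fun z => (1 - F z) ^ (1 - θ))
              ((1 - θ) * (1 - F y) ^ (1 - θ - 1) * (-f y)) y := by have h := houter.comp y (hFbd y hy0); exact h
          have hd := hcomp.div_const (θ - 1)
          refine hd.congr_deriv (Eq.symm ?_)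
          rw [hPH y hy0]
          have hr : (1 - F y) ^ (1 - θ - 1) = ((1 - F y) ^ θ)⁻¹ := by
            rw [show (1 - θ - 1 : ℝ) = -θ by ring, Real.rpow_neg hFby.le]
          rw [hr]
          have hpθ : ((1 - F y) ^ θ) ≠ 0 := (Real.rpow_pos_of_pos hFby θ).ne'
          have hne : (1 - F y) ≠ 0 := hFby.ne'
          field_simp
          ring
        have heq := integral_eq_sub_of_hasDeriv_right_of_le hx.le hφc
          (fun y hy => (hφd y hy).hasDerivWithinAt) (hint2 x hx)
        show (∫ t in (0:ℝ)..x, f t / (1 - G t)) = ((1 - F x) ^ (1 - θ) - 1) / (θ - 1)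
        rw [heq, hF0]
        simp only [sub_zero, Real.one_rpow]
        ring
      have hIx : (∫ t in (0:ℝ)..x, g t / (1 - F t)) = θ / (θ - 1) * (1 - (1 - F x) ^ (θ - 1)) :=
        hIval
      have hJx : (∫ t in (0:ℝ)..x, f t / (1 - G t)) = ((1 - F x) ^ (1 - θ) - 1) / (θ - 1) :=
        hJval
      rw [hIx, hJx, hPH x hx]
      have hFbx : (0:ℝ) < 1 - F x := hFbarpos x hx
      have hu : (0:ℝ) < (1 - F x) ^ θ := Real.rpow_pos_of_pos hFbx θ
      have h1 : (1 - F x) ^ (θ - 1) = (1 - F x) ^ θ / (1 - F x) := by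
        rw [Real.rpow_sub hFbx, Real.rpow_one]
      have h2 : (1 - F x) ^ (1 - θ) = (1 - F x) / (1 - F x) ^ θ := by
        rw [Real.rpow_sub hFbx, Real.rpow_one]
      rw [h1, h2]
      field_simp
      ring
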